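/- Fix ρ > 0. For all t ∈ ℝ and all s > 2t, the quantity sinh(√ρ·s) − sinh(2√ρ·t) is positive, and the function u(t,s) = √ρ·cosh(2√ρ·t)/(2(sinh(√ρ·s) − sinh(2√ρ·t))) satisfies the logarithmic diffusion equation ∂u/∂t = ∂²(log u)/∂s². Moreover the curvature R = −(1/u)·∂²(log u)/∂s² equals −(2√ρ/cosh(2√ρ t))·(sinh(2√ρ t)·sinh(√ρ s) + 1)/(sinh(√ρ s) − sinh(2√ρ t)) and satisfies R ≤ −2√ρ·tanh(2√ρ t) on the domain s > 2t. -/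

import Mathlib

/-- The eternal Ricci flow of the case `σ < 0`: for `ρ > 0`, `t ∈ ℝ`, `s > 2t`,
`sinh(√ρ s) − sinh(2√ρ t) > 0`, the conformal factor
`u(t,s) = √ρ cosh(2√ρ t)/(2(sinh(√ρ s) − sinh(2√ρ t)))` solves
`u_t = (log u)_{ss}`, and the curvature `R = −u⁻¹(log u)_{ss}` equals
`−(2√ρ/cosh(2√ρ t))(sinh(2√ρ t)sinh(√ρ s) + 1)/(sinh(√ρ s) − sinh(2√ρ t))`
and is bounded above by `−2√ρ tanh(2√ρ t)`. -/
theorem stmt_17 (ρ : ℝ) (hρ : 0 < ρ) (u R : ℝ → ℝ → ℝ)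
    (hudef : ∀ t s, u t s =
      Real.sqrt ρ * Real.cosh (2 * Real.sqrt ρ * t) /
        (2 * (Real.sinh (Real.sqrt ρ * s) - Real.sinh (2 * Real.sqrt ρ * t))))
    (hRdef : ∀ t s, R t s =
      -(1 / u t s) * deriv (fun s' => deriv (fun s'' => Real.log (u t s'')) s') s) :
    ∀ t : ℝ, ∀ s : ℝ, 2 * t < s →
      0 < Real.sinh (Real.sqrt ρ * s) - Real.sinh (2 * Real.sqrt ρ * t) ∧
      deriv (fun t' => u t' s) t =
        deriv (fun s' => deriv (fun s'' => Real.log (u t s'')) s') s ∧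
      R t s =
        -(2 * Real.sqrt ρ / Real.cosh (2 * Real.sqrt ρ * t)) *
          ((Real.sinh (2 * Real.sqrt ρ * t) * Real.sinh (Real.sqrt ρ * s) + 1) /
            (Real.sinh (Real.sqrt ρ * s) - Real.sinh (2 * Real.sqrt ρ * t))) ∧
      R t s ≤ -2 * Real.sqrt ρ * Real.tanh (2 * Real.sqrt ρ * t) := by
  intro t s hts
  set a := Real.sqrt ρ with ha_def
  have ha : 0 < a := Real.sqrt_pos.mpr hρ
  set c := Real.sinh (2 * a * t) with hc_def
  have hC : 0 < Real.cosh (2 * a * t) := Real.cosh_pos _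
  have hD : 0 < Real.sinh (a * s) - c := by
    rw [hc_def, sub_pos]
    exact Real.sinh_lt_sinh.mpr (by nlinarith)
  have hK : 0 < a * Real.cosh (2 * a * t) := by positivity
  -- derivative of sinh (a x) in x
  have hsinh : ∀ x : ℝ, HasDerivAt (fun y => Real.sinh (a * y)) (a * Real.cosh (a * x)) x := by
    intro x
    have h1 : HasDerivAt (fun y : ℝ => a * y) a x := by
      simpa using (hasDerivAt_id x).const_mul a
    simpa [Function.comp_def, mul_comm] using (Real.hasDerivAt_sinh (a * x)).comp x h1
  have hcont : Continuous fun x : ℝ => Real.sinh (a * x) - c :=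
    (Real.continuous_sinh.comp (continuous_const.mul continuous_id)).sub continuous_const
  -- first log-derivative at any point with positive denominator
  have hlogder : ∀ x : ℝ, 0 < Real.sinh (a * x) - c →
      HasDerivAt (fun y => Real.log (u t y))
        (-(a * Real.cosh (a * x)) / (Real.sinh (a * x) - c)) x := by
    intro x hx
    have hEvx : ∀ᶠ y in nhds x, 0 < Real.sinh (a * y) - c :=
      (hcont.continuousAt (x := x)).eventually (eventually_gt_nhds hx)
    have h2 : HasDerivAt (fun y => 2 * (Real.sinh (a * y) - c))
        (2 * (a * Real.cosh (a * x))) x := ((hsinh x).sub_const c).const_mul 2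
    have hne : 2 * (Real.sinh (a * x) - c) ≠ 0 := by positivity
    have h3 := h2.log hne
    have h4 : HasDerivAt
        (fun y => Real.log (a * Real.cosh (2 * a * t)) -
          Real.log (2 * (Real.sinh (a * y) - c)))
        (0 - 2 * (a * Real.cosh (a * x)) / (2 * (Real.sinh (a * x) - c))) x :=
      (hasDerivAt_const x _).sub h3
    have heq : (fun y => Real.log (u t y)) =ᶠ[nhds x]
        (fun y => Real.log (a * Real.cosh (2 * a * t)) -
          Real.log (2 * (Real.sinh (a * y) - c))) := by
      filter_upwards [hEvx] with y hy
      rw [hudef t y, ← hc_def, Real.log_div hK.ne' (by positivity)]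
    have h5 := h4.congr_of_eventuallyEq heq
    have hval : 0 - 2 * (a * Real.cosh (a * x)) / (2 * (Real.sinh (a * x) - c)) =
        -(a * Real.cosh (a * x)) / (Real.sinh (a * x) - c) := by
      field_simp; ring
    rwa [hval] at h5
  have hEv : ∀ᶠ x in nhds s, 0 < Real.sinh (a * x) - c :=
    (hcont.continuousAt (x := s)).eventually (eventually_gt_nhds hD)
  have hEvEq : (fun x => deriv (fun s'' => Real.log (u t s'')) x) =ᶠ[nhds s]
      (fun x => -(a * Real.cosh (a * x)) / (Real.sinh (a * x) - c)) := by
    filter_upwards [hEv] with x hx using (hlogder x hx).deriv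
  have hd2 : deriv (fun s' => deriv (fun s'' => Real.log (u t s'')) s') s =
      deriv (fun x => -(a * Real.cosh (a * x)) / (Real.sinh (a * x) - c)) s :=
    hEvEq.deriv_eq
  -- second derivative
  have hcosh : HasDerivAt (fun y => Real.cosh (a * y)) (a * Real.sinh (a * s)) s := by
    have h1 : HasDerivAt (fun y : ℝ => a * y) a s := by
      simpa using (hasDerivAt_id s).const_mul a
    simpa [Function.comp_def, mul_comm] using (Real.hasDerivAt_cosh (a * s)).comp s h1
  have hnum : HasDerivAt (fun y => -(a * Real.cosh (a * y)))
      (-(a * (a * Real.sinh (a * s)))) s := (hcosh.const_mul a).neg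
  have hden : HasDerivAt (fun y => Real.sinh (a * y) - c) (a * Real.cosh (a * s)) s :=
    (hsinh s).sub_const c
  have hg := (hnum.div hden hD.ne').deriv
  set L : ℝ := (-(a * (a * Real.sinh (a * s))) * (Real.sinh (a * s) - c) -
      -(a * Real.cosh (a * s)) * (a * Real.cosh (a * s))) / (Real.sinh (a * s) - c) ^ 2
    with hL_def
  have hss : deriv (fun s' => deriv (fun s'' => Real.log (u t s'')) s') s = L := by
    rw [hd2]; exact hg
  -- time derivative of u
  have hsinh2 : HasDerivAt (fun t' => Real.sinh (2 * a * t'))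
      (2 * a * Real.cosh (2 * a * t)) t := by
    have h1 : HasDerivAt (fun t' : ℝ => 2 * a * t') (2 * a) t := by
      simpa using (hasDerivAt_id t).const_mul (2 * a)
    simpa [Function.comp_def, mul_comm] using (Real.hasDerivAt_sinh (2 * a * t)).comp t h1
  have hcosh2 : HasDerivAt (fun t' => Real.cosh (2 * a * t'))
      (2 * a * Real.sinh (2 * a * t)) t := by
    have h1 : HasDerivAt (fun t' : ℝ => 2 * a * t') (2 * a) t := by
      simpa using (hasDerivAt_id t).const_mul (2 * a)
    simpa [Function.comp_def, mul_comm] using (Real.hasDerivAt_cosh (2 * a * t)).comp t h1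
  have hnum2 : HasDerivAt (fun t' => a * Real.cosh (2 * a * t'))
      (a * (2 * a * Real.sinh (2 * a * t))) t := hcosh2.const_mul a
  have hden2 : HasDerivAt (fun t' => 2 * (Real.sinh (a * s) - Real.sinh (2 * a * t')))
      (2 * (0 - 2 * a * Real.cosh (2 * a * t))) t :=
    ((hasDerivAt_const t (Real.sinh (a * s))).sub hsinh2).const_mul 2
  have hden2ne : 2 * (Real.sinh (a * s) - Real.sinh (2 * a * t)) ≠ 0 := by
    rw [← hc_def]; positivity
  have hut0 := hnum2.div hden2 hden2ne
  have hfun : (fun t' => u t' s) =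
      (fun t' => a * Real.cosh (2 * a * t') /
        (2 * (Real.sinh (a * s) - Real.sinh (2 * a * t')))) :=
    funext fun t' => hudef t' s
  have hut : deriv (fun t' => u t' s) t =
      (a * (2 * a * Real.sinh (2 * a * t)) *
          (2 * (Real.sinh (a * s) - Real.sinh (2 * a * t))) -
        a * Real.cosh (2 * a * t) * (2 * (0 - 2 * a * Real.cosh (2 * a * t)))) /
        (2 * (Real.sinh (a * s) - Real.sinh (2 * a * t))) ^ 2 := by
    rw [hfun]; exact hut0.deriv
  have hpyth1 := Real.cosh_sq_sub_sinh_sq (2 * a * t)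
  have hpyth2 := Real.cosh_sq_sub_sinh_sq (a * s)
  rw [← hc_def] at hpyth1
  have hDne := hD.ne'
  -- the curvature formula
  have hRform : R t s = -(2 * a / Real.cosh (2 * a * t)) *
      ((c * Real.sinh (a * s) + 1) / (Real.sinh (a * s) - c)) := by
    rw [hRdef t s, hss, hL_def, hudef t s, ← hc_def]
    field_simp
    linear_combination (-1 : ℝ) * hpyth2
  refine ⟨hD, ?_, hRform, ?_⟩
  · rw [hut, hss, hL_def, ← hc_def]
    field_simp
    rw [show a * 2 * t = 2 * a * t by ring]
    linear_combination (2 * a) * hpyth1 - (2 * a) * hpyth2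
  · rw [hRform, Real.tanh_eq_sinh_div_cosh, ← hc_def]
    have h1 : c ≤ (c * Real.sinh (a * s) + 1) / (Real.sinh (a * s) - c) :=
      (le_div_iff₀ hD).mpr (by nlinarith [sq_nonneg c])
    have h2 : -(2 * a / Real.cosh (2 * a * t)) *
        ((c * Real.sinh (a * s) + 1) / (Real.sinh (a * s) - c)) ≤
        -(2 * a / Real.cosh (2 * a * t)) * c := by
      have hpos : (0:ℝ) ≤ 2 * a / Real.cosh (2 * a * t) := by positivity
      nlinarith [mul_le_mul_of_nonneg_left h1 hpos]
    have h3 : -(2 * a / Real.cosh (2 * a * t)) * c =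
        -2 * a * (c / Real.cosh (2 * a * t)) := by ring
    linarith [h2, h3.le]
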